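/- Let g : ℝ^d → ℝ^p be injective, f_causal : ℝ^d → ℝ, and ε a real random variable with mean 0 and variance σ². Define h_causal : Im(g) → ℝ by h_causal(g(z)) = f_causal(z) (well-defined by injectivity). For h : ℝ^p → ℝ define the worst-case risk S(h) = sup_{a ∈ ℝ^d} E[(f_causal(a) + ε - h(g(a)))²]. Then S(h) ≥ σ² for all h, S(h) = σ² if and only if h agrees with h_causal on Im(g), and consequently every minimizer of S coincides with f_causal ∘ g⁻¹ on the image of g. -/

import Mathlib

open MeasureTheory

lemma stmt2_key {Ω : Type*} [MeasurableSpace Ω] (μ : Measure Ω)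
    [IsProbabilityMeasure μ] (ε : Ω → ℝ) (hε2 : MemLp ε 2 μ)
    (hmean : ∫ ω, ε ω ∂μ = 0) (c : ℝ) :
    ∫ ω, (c + ε ω) ^ 2 ∂μ = c ^ 2 + ∫ ω, (ε ω) ^ 2 ∂μ := by
  have hεi : Integrable ε μ := hε2.integrable (by norm_num)
  have hsq : Integrable (fun ω => (ε ω) ^ 2) μ := by
    have := hε2.integrable_sq
    simpa [sq] using this
  have : ∀ ω, (c + ε ω) ^ 2 = c ^ 2 + ((2 * c) * ε ω + (ε ω) ^ 2) := by
    intro ω; ring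
  rw [integral_congr_ae (Filter.Eventually.of_forall this)]
  rw [integral_add (integrable_const _)
      (((hεi.const_mul (2*c)).add hsq).congr (Filter.Eventually.of_forall fun ω => rfl) :
        Integrable (fun ω => 2 * c * ε ω + ε ω ^ 2) μ),
    integral_add
      ((hεi.const_mul (2*c)).congr (Filter.Eventually.of_forall fun ω => rfl) :
        Integrable (fun ω => 2 * c * ε ω) μ) hsq,
    integral_const_mul, hmean]
  simp

/-- Lemma 2: with observations X = g(Z) for injective g, do-interventions do(Z = a)
for all a ∈ ℝ^d and Y = f_causal(a) + ε, the worst-case risk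
S(h) = sup_a E[(Y - h(g(a)))²] satisfies S(h) ≥ σ² for all h, S(h) = σ² iff h
agrees with h_causal = f_causal ∘ g⁻¹ on Im(g), and every minimizer of S agrees
with f_causal ∘ g⁻¹ on Im(g). -/
theorem stmt_2 {d p : ℕ} {Ω : Type*} [MeasurableSpace Ω] (μ : Measure Ω)
    [IsProbabilityMeasure μ] (ε : Ω → ℝ) (hε2 : MemLp ε 2 μ)
    (hmean : ∫ ω, ε ω ∂μ = 0)
    (σ2 : ℝ) (hσ2 : σ2 = ∫ ω, (ε ω) ^ 2 ∂μ)
    (g : (Fin d → ℝ) → (Fin p → ℝ)) (hg : Function.Injective g)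
    (f_causal : (Fin d → ℝ) → ℝ) :
    (∀ h : (Fin p → ℝ) → ℝ,
      ENNReal.ofReal σ2 ≤
        ⨆ a : Fin d → ℝ, ENNReal.ofReal (∫ ω, (f_causal a + ε ω - h (g a)) ^ 2 ∂μ)) ∧
    (∀ h : (Fin p → ℝ) → ℝ,
      (⨆ a : Fin d → ℝ, ENNReal.ofReal (∫ ω, (f_causal a + ε ω - h (g a)) ^ 2 ∂μ))
          = ENNReal.ofReal σ2
        ↔ ∀ a : Fin d → ℝ, h (g a) = f_causal a) ∧
    (∀ h : (Fin p → ℝ) → ℝ,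
      (∀ h' : (Fin p → ℝ) → ℝ,
        (⨆ a : Fin d → ℝ, ENNReal.ofReal (∫ ω, (f_causal a + ε ω - h (g a)) ^ 2 ∂μ)) ≤
          ⨆ a : Fin d → ℝ, ENNReal.ofReal (∫ ω, (f_causal a + ε ω - h' (g a)) ^ 2 ∂μ)) →
      ∀ a : Fin d → ℝ, h (g a) = f_causal a) := by
  have hσnn : 0 ≤ σ2 := hσ2 ▸ integral_nonneg fun ω => sq_nonneg _
  have key : ∀ (h : (Fin p → ℝ) → ℝ) (a : Fin d → ℝ),
      ∫ ω, (f_causal a + ε ω - h (g a)) ^ 2 ∂μ = (f_causal a - h (g a)) ^ 2 + σ2 := by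
    intro h a
    have : ∀ ω, (f_causal a + ε ω - h (g a)) ^ 2 = ((f_causal a - h (g a)) + ε ω) ^ 2 := by
      intro ω; ring
    rw [integral_congr_ae (Filter.Eventually.of_forall this),
      stmt2_key μ ε hε2 hmean, hσ2]
  -- part 1
  have part1 : ∀ h : (Fin p → ℝ) → ℝ,
      ENNReal.ofReal σ2 ≤
        ⨆ a : Fin d → ℝ, ENNReal.ofReal (∫ ω, (f_causal a + ε ω - h (g a)) ^ 2 ∂μ) := by
    intro h
    refine le_trans ?_ (le_iSup _ (0 : Fin d → ℝ))
    rw [key h 0]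
    exact ENNReal.ofReal_le_ofReal (by nlinarith [sq_nonneg (f_causal 0 - h (g 0))])
  have part2 : ∀ h : (Fin p → ℝ) → ℝ,
      (⨆ a : Fin d → ℝ, ENNReal.ofReal (∫ ω, (f_causal a + ε ω - h (g a)) ^ 2 ∂μ))
          = ENNReal.ofReal σ2
        ↔ ∀ a : Fin d → ℝ, h (g a) = f_causal a := by
    intro h
    constructor
    · intro heq a
      have hle : ENNReal.ofReal (∫ ω, (f_causal a + ε ω - h (g a)) ^ 2 ∂μ)
          ≤ ENNReal.ofReal σ2 := by
        have := le_iSup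
          (fun a => ENNReal.ofReal (∫ ω, (f_causal a + ε ω - h (g a)) ^ 2 ∂μ)) a
        rwa [heq] at this
      rw [key h a, ENNReal.ofReal_le_ofReal_iff hσnn] at hle
      nlinarith [sq_nonneg (f_causal a - h (g a))]
    · intro hagree
      refine le_antisymm (iSup_le fun a => ?_) (part1 h)
      rw [key h a, hagree a]
      simp
  refine ⟨part1, part2, ?_⟩
  intro h hmin a
  have : Nonempty (Fin d → ℝ) := ⟨0⟩
  set h' : (Fin p → ℝ) → ℝ := fun x => f_causal (Function.invFun g x) with hh'
  have hh'g : ∀ b, h' (g b) = f_causal b := fun b => by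
    simp [hh', Function.leftInverse_invFun hg b]
  have hs' : (⨆ a : Fin d → ℝ, ENNReal.ofReal (∫ ω, (f_causal a + ε ω - h' (g a)) ^ 2 ∂μ))
      = ENNReal.ofReal σ2 := (part2 h').mpr hh'g
  have := hmin h'
  rw [hs'] at this
  exact (part2 h).mp (le_antisymm this (part1 h)) a
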